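/- Let X be a nonempty compact metric space, E ⊆ C(X,ℝ) a linear subspace, and f ∈ C(X,ℝ). Suppose that every Borel probability measure μ on X annihilating E satisfies ∫ f dμ ≥ 0. Then for every ε > 0 there exists g ∈ E such that f(x) − g(x) ≥ −ε for all x ∈ X. -/

import Mathlib

open MeasureTheory Set TopologicalSpace ENNReal NNReal Pointwise
set_option linter.unusedSectionVars false
set_option linter.unusedVariables false

section RMK
variable {X : Type*} [MetricSpace X] [CompactSpace X] [Nonempty X]
variable (Ψ : C(X, ℝ) →ₗ[ℝ] ℝ)

/-- test functions for a set `K`. -/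
def testFns (K : Set X) : Set C(X, ℝ) := {g | (∀ x, 0 ≤ g x) ∧ ∀ x ∈ K, 1 ≤ g x}

/-- real-valued Riesz content. -/
noncomputable def rcR (K : Set X) : ℝ := sInf (Ψ '' testFns K)

variable {Ψ}

lemma one_mem_testFns (K : Set X) : (1 : C(X, ℝ)) ∈ testFns K :=
  ⟨fun _ => zero_le_one, fun _ _ => le_refl _⟩

lemma testImg_nonempty (K : Set X) : (Ψ '' testFns K).Nonempty :=
  ⟨Ψ 1, ⟨1, one_mem_testFns K, rfl⟩⟩

variable (hΨ : ∀ g : C(X, ℝ), (∀ x, 0 ≤ g x) → 0 ≤ Ψ g)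
include hΨ

lemma psi_mono {g₁ g₂ : C(X, ℝ)} (h : ∀ x, g₁ x ≤ g₂ x) : Ψ g₁ ≤ Ψ g₂ := by
  have h0 : 0 ≤ Ψ (g₂ - g₁) := hΨ _ (fun x => by
    simp only [ContinuousMap.sub_apply, sub_nonneg]; exact h x)
  have := map_sub Ψ g₂ g₁
  linarith [this ▸ h0]

lemma bddBelow_testImg (K : Set X) : BddBelow (Ψ '' testFns K) :=
  ⟨0, fun b ⟨g, hg, hb⟩ => hb ▸ hΨ g hg.1⟩

lemma rcR_nonneg (K : Set X) : 0 ≤ rcR Ψ K :=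
  le_csInf (testImg_nonempty K) (fun b ⟨g, hg, hb⟩ => hb ▸ hΨ g hg.1)

lemma rcR_le {K : Set X} {g : C(X, ℝ)} (hg : g ∈ testFns K) : rcR Ψ K ≤ Ψ g :=
  csInf_le (bddBelow_testImg hΨ K) ⟨g, hg, rfl⟩

lemma rcR_mono {K₁ K₂ : Set X} (h : K₁ ⊆ K₂) : rcR Ψ K₁ ≤ rcR Ψ K₂ :=
  le_csInf (testImg_nonempty K₂) (fun b ⟨g, hg, hb⟩ =>
    hb ▸ rcR_le hΨ ⟨hg.1, fun x hx => hg.2 x (h hx)⟩)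

lemma exists_test (K : Set X) {ε : ℝ} (hε : 0 < ε) :
    ∃ g ∈ testFns K, Ψ g < rcR Ψ K + ε := by
  obtain ⟨a, ⟨g, hg, rfl⟩, ha⟩ := Real.lt_sInf_add_pos (testImg_nonempty K) hε
  exact ⟨g, hg, ha⟩

lemma rcR_union_le (K₁ K₂ : Set X) : rcR Ψ (K₁ ∪ K₂) ≤ rcR Ψ K₁ + rcR Ψ K₂ := by
  refine le_of_forall_pos_le_add (fun ε hε => ?_)
  obtain ⟨g₁, hg₁, h₁⟩ := exists_test hΨ K₁ (half_pos hε)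
  obtain ⟨g₂, hg₂, h₂⟩ := exists_test hΨ K₂ (half_pos hε)
  have : g₁ + g₂ ∈ testFns (K₁ ∪ K₂) := by
    refine ⟨fun x => add_nonneg (hg₁.1 x) (hg₂.1 x), fun x hx => ?_⟩
    rcases hx with hx | hx
    · calc (1:ℝ) ≤ g₁ x := hg₁.2 x hx
        _ ≤ g₁ x + g₂ x := le_add_of_nonneg_right (hg₂.1 x)
        _ = (g₁ + g₂) x := rfl
    · calc (1:ℝ) ≤ g₂ x := hg₂.2 x hx
        _ ≤ g₁ x + g₂ x := le_add_of_nonneg_left (hg₁.1 x)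
        _ = (g₁ + g₂) x := rfl
  calc rcR Ψ (K₁ ∪ K₂) ≤ Ψ (g₁ + g₂) := rcR_le hΨ this
    _ = Ψ g₁ + Ψ g₂ := map_add Ψ g₁ g₂
    _ ≤ rcR Ψ K₁ + ε/2 + (rcR Ψ K₂ + ε/2) := by linarith
    _ = rcR Ψ K₁ + rcR Ψ K₂ + ε := by ring

lemma rcR_union_disjoint {K₁ K₂ : Set X} (hc₁ : IsClosed K₁) (hc₂ : IsClosed K₂)
    (hd : Disjoint K₁ K₂) : rcR Ψ K₁ + rcR Ψ K₂ ≤ rcR Ψ (K₁ ∪ K₂) := by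
  obtain ⟨χ, hχ₁, hχ₂, hχI⟩ := exists_continuous_zero_one_of_isClosed hc₁ hc₂ hd
  refine le_csInf (testImg_nonempty _) ?_
  rintro b ⟨g, hg, rfl⟩
  have h1 : g * (1 - χ) ∈ testFns K₁ := by
    refine ⟨fun x => mul_nonneg (hg.1 x) (by
      have := (hχI x).2
      simp only [ContinuousMap.sub_apply, ContinuousMap.one_apply]; linarith), fun x hx => ?_⟩
    have h0 : χ x = 0 := hχ₁ hx
    have := hg.2 x (Or.inl hx)
    simp only [ContinuousMap.mul_apply, ContinuousMap.sub_apply, ContinuousMap.one_apply, h0]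
    linarith
  have h2 : g * χ ∈ testFns K₂ := by
    refine ⟨fun x => mul_nonneg (hg.1 x) (hχI x).1, fun x hx => ?_⟩
    have h0 : χ x = 1 := hχ₂ hx
    have := hg.2 x (Or.inr hx)
    simp only [ContinuousMap.mul_apply, h0]
    linarith
  calc rcR Ψ K₁ + rcR Ψ K₂ ≤ Ψ (g * (1 - χ)) + Ψ (g * χ) :=
        add_le_add (rcR_le hΨ h1) (rcR_le hΨ h2)
    _ = Ψ (g * (1 - χ) + g * χ) := (map_add Ψ _ _).symm
    _ = Ψ g := by ring_nf

end RMK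

section RMK2
variable {X : Type*} [MetricSpace X] [CompactSpace X] [Nonempty X]
variable {Ψ : C(X, ℝ) →ₗ[ℝ] ℝ}
variable (hΨ : ∀ g : C(X, ℝ), (∀ x, 0 ≤ g x) → 0 ≤ Ψ g)

/-- The Riesz content associated to a positive functional. -/
noncomputable def rieszCt (hΨ : ∀ g : C(X, ℝ), (∀ x, 0 ≤ g x) → 0 ≤ Ψ g) : Content X where
  toFun K := (rcR Ψ (K : Set X)).toNNReal
  mono' K₁ K₂ h := Real.toNNReal_mono (rcR_mono hΨ h)
  sup_le' K₁ K₂ := by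
    rw [← Real.toNNReal_add (rcR_nonneg hΨ _) (rcR_nonneg hΨ _)]
    exact Real.toNNReal_mono (by
      simpa using rcR_union_le hΨ (K₁ : Set X) (K₂ : Set X))
  sup_disjoint' K₁ K₂ hd h₁ h₂ := by
    have he : rcR Ψ ((K₁ ⊔ K₂ : Compacts X) : Set X)
        = rcR Ψ (K₁ : Set X) + rcR Ψ (K₂ : Set X) :=
      le_antisymm (by simpa using rcR_union_le hΨ (K₁ : Set X) (K₂ : Set X))
        (by simpa using rcR_union_disjoint hΨ h₁ h₂ hd)
    rw [he, Real.toNNReal_add (rcR_nonneg hΨ _) (rcR_nonneg hΨ _)]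

include hΨ

lemma rieszCt_apply (K : Compacts X) :
    (rieszCt hΨ) K = ENNReal.ofReal (rcR Ψ (K : Set X)) := rfl

variable (hΨ1 : Ψ 1 = 1)
include hΨ1

lemma rcR_le_one (K : Set X) : rcR Ψ K ≤ 1 := by
  have := rcR_le hΨ (one_mem_testFns K)
  rwa [hΨ1] at this

lemma rieszCt_regular : (rieszCt hΨ).ContentRegular := by
  intro K
  refine le_antisymm (le_iInf fun K' => le_iInf fun hK' => ?_) ?_
  · exact (rieszCt hΨ).mono _ _ (hK'.trans interior_subset)
  · refine ENNReal.le_of_forall_pos_le_add (fun η hη _ => ?_)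
    have hη' : (0:ℝ) < η := hη
    -- choose a good test function
    obtain ⟨g, hg, hgΨ⟩ := exists_test hΨ (K : Set X) (half_pos hη')
    set δ : ℝ := η / (2 * (2 + η)) with hδdef
    have hδ0 : 0 < δ := by positivity
    have hδ1 : δ < 1 := by
      rw [hδdef, div_lt_one (by positivity)]; nlinarith
    set K' : Compacts X := ⟨{x | 1 - δ ≤ g x}, (IsClosed.isCompact (by
      have : {x | 1 - δ ≤ g x} = g ⁻¹' (Ici (1 - δ)) := rfl
      rw [this]; exact isClosed_Ici.preimage g.continuous))⟩ with hK'def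
    have hsub : (K : Set X) ⊆ interior (K' : Set X) := by
      have hopen : IsOpen {x | 1 - δ < g x} := by
        have : {x | 1 - δ < g x} = g ⁻¹' (Ioi (1 - δ)) := rfl
        rw [this]; exact isOpen_Ioi.preimage g.continuous
      refine subset_trans (fun x hx => ?_) (hopen.subset_interior_iff.mpr ?_)
      · have := hg.2 x hx; simp only [mem_setOf_eq]; linarith
      · exact fun x hx => (le_of_lt hx : 1 - δ ≤ g x)
    refine le_trans (iInf_le_of_le K' (iInf_le_of_le hsub le_rfl)) ?_
    -- bound the content of K'
    have htest : (1 - δ)⁻¹ • g ∈ testFns (K' : Set X) := by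
      constructor
      · intro x
        simp only [ContinuousMap.smul_apply, smul_eq_mul]
        exact mul_nonneg (inv_nonneg.mpr (by linarith)) (hg.1 x)
      · intro x hx
        simp only [ContinuousMap.smul_apply, smul_eq_mul]
        have hx' : 1 - δ ≤ g x := hx
        rw [inv_mul_eq_div, le_div_iff₀ (by linarith)]
        linarith
    have hb : rcR Ψ (K' : Set X) ≤ (1 - δ)⁻¹ * Ψ g := by
      have := rcR_le hΨ htest
      rwa [_root_.map_smul, smul_eq_mul] at this
    have hK1 : rcR Ψ (K : Set X) ≤ 1 := rcR_le_one hΨ hΨ1 _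
    have hfinal : (1 - δ)⁻¹ * Ψ g ≤ rcR Ψ (K : Set X) + η := by
      rw [inv_mul_eq_div, div_le_iff₀ (by linarith)]
      have hΨg0 : Ψ g ≥ 0 := hΨ g hg.1
      have h2 : Ψ g ≤ rcR Ψ (K : Set X) + η/2 := by linarith
      have hδsmall : δ * (rcR Ψ (K : Set X) + η) ≤ η/2 := by
        have h3 : rcR Ψ (K : Set X) + η ≤ 1 + η := by linarith
        have h4 : δ * (rcR Ψ (K : Set X) + η) ≤ δ * (1 + η) :=
          mul_le_mul_of_nonneg_left h3 (le_of_lt hδ0)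
        have h5 : δ * (1 + η) ≤ η / 2 := by
          rw [hδdef, div_mul_eq_mul_div, div_le_div_iff₀ (by positivity) (by norm_num)]
          nlinarith
        linarith
      nlinarith [rcR_nonneg hΨ (K : Set X)]
    calc ((rieszCt hΨ) K' : ℝ≥0∞) = ENNReal.ofReal (rcR Ψ (K' : Set X)) := rieszCt_apply hΨ _
      _ ≤ ENNReal.ofReal (rcR Ψ (K : Set X) + η) :=
          ENNReal.ofReal_le_ofReal (le_trans hb hfinal)
      _ = ENNReal.ofReal (rcR Ψ (K : Set X)) + ENNReal.ofReal (η : ℝ) :=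
          ENNReal.ofReal_add (rcR_nonneg hΨ _) (le_of_lt hη')
      _ = (rieszCt hΨ) K + (η : ℝ≥0∞) := by
          rw [rieszCt_apply hΨ, ENNReal.ofReal_coe_nnreal]

end RMK2

section RMK3
variable {X : Type*} [MetricSpace X] [CompactSpace X] [Nonempty X]
    [MeasurableSpace X] [BorelSpace X]
variable {Ψ : C(X, ℝ) →ₗ[ℝ] ℝ}
variable (hΨ : ∀ g : C(X, ℝ), (∀ x, 0 ≤ g x) → 0 ≤ Ψ g) (hΨ1 : Ψ 1 = 1)

/-- The Riesz measure. -/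
noncomputable def rieszμ (hΨ : ∀ g : C(X, ℝ), (∀ x, 0 ≤ g x) → 0 ≤ Ψ g) : Measure X :=
  (rieszCt hΨ).measure

include hΨ hΨ1

lemma rieszμ_univ : rieszμ hΨ (univ : Set X) = 1 := by
  have h1 : rieszμ hΨ (univ : Set X) = (rieszCt hΨ) ⟨univ, isCompact_univ⟩ := by
    have := Content.measure_eq_content_of_regular (rieszCt hΨ) (rieszCt_regular hΨ hΨ1)
      ⟨univ, isCompact_univ⟩
    simpa [rieszμ] using this
  rw [h1, rieszCt_apply hΨ]
  simp only [Compacts.coe_mk]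
  have : rcR Ψ (univ : Set X) = 1 := by
    refine le_antisymm (by simpa [hΨ1] using rcR_le hΨ (one_mem_testFns (univ : Set X))) ?_
    refine le_csInf (testImg_nonempty _) ?_
    rintro b ⟨g, hg, rfl⟩
    have : Ψ 1 ≤ Ψ g := psi_mono hΨ (fun x => by simpa using hg.2 x (mem_univ x))
    rw [hΨ1] at this; linarith
  rw [this]; simp

lemma rieszμ_prob : IsProbabilityMeasure (rieszμ hΨ) := ⟨rieszμ_univ hΨ hΨ1⟩

omit hΨ1

lemma rieszμ_open_le {U : Set X} (hU : IsOpen U) {g : C(X, ℝ)} (hg0 : ∀ x, 0 ≤ g x)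
    (hgU : ∀ x ∈ U, 1 ≤ g x) : rieszμ hΨ U ≤ ENNReal.ofReal (Ψ g) := by
  rw [rieszμ, Content.measure_apply _ hU.measurableSet,
    Content.outerMeasure_of_isOpen _ _ hU]
  have : (rieszCt hΨ).innerContent ⟨U, hU⟩ ≤ ENNReal.ofReal (Ψ g) := by
    refine iSup_le fun K => iSup_le fun hK => ?_
    rw [rieszCt_apply hΨ]
    exact ENNReal.ofReal_le_ofReal (rcR_le hΨ ⟨hg0, fun x hx => hgU x (hK hx)⟩)
  exact this

end RMK3

/-- staircase identity for clamps. -/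
lemma staircase (N : ℕ) : ∀ y : ℝ, 0 ≤ y → y ≤ N →
    ∑ k ∈ Finset.range N, min 1 (max 0 (y - k)) = y := by
  induction N with
  | zero => intro y h0 hN; simp at hN ⊢; linarith
  | succ N ih =>
    intro y h0 hN
    rw [Finset.sum_range_succ]
    by_cases hy : y ≤ N
    · rw [ih y h0 hy]
      have : max 0 (y - N) = 0 := by
        rw [max_eq_left]; linarith
      rw [this]; simp
    · push_neg at hy
      have hterm : ∀ k ∈ Finset.range N, min 1 (max 0 (y - k)) = 1 := by
        intro k hk
        have hk' : (k : ℝ) ≤ N - 1 := by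
          have := Finset.mem_range.mp hk
          have : (k : ℝ) ≤ (N : ℝ) - 1 := by
            have h2 : (k : ℝ) + 1 ≤ N := by exact_mod_cast this
            linarith
          exact this
        have h1 : 1 ≤ y - k := by linarith
        rw [min_eq_left]
        rw [max_eq_right] <;> linarith
      rw [Finset.sum_congr rfl hterm]
      have hN' : (N : ℝ) ≤ y := le_of_lt hy
      have : min 1 (max 0 (y - N)) = y - N := by
        rw [max_eq_right (by linarith)]
        rw [min_eq_right]
        push_cast at hN ⊢
        linarith
      rw [this]
      simp

section RMK4
variable {X : Type*} [MetricSpace X] [CompactSpace X] [Nonempty X]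
    [MeasurableSpace X] [BorelSpace X]
variable {Ψ : C(X, ℝ) →ₗ[ℝ] ℝ}
variable (hΨ : ∀ g : C(X, ℝ), (∀ x, 0 ≤ g x) → 0 ≤ Ψ g) (hΨ1 : Ψ 1 = 1)

lemma cm_integrable (μ : Measure X) [IsFiniteMeasure μ] (h : C(X, ℝ)) :
    Integrable (fun x => h x) μ :=
  h.continuous.integrable_of_hasCompactSupport
    (IsCompact.of_isClosed_subset isCompact_univ (isClosed_tsupport _) (subset_univ _))

include hΨ hΨ1

lemma integral_le_psi (h : C(X, ℝ)) (hh : ∀ x, 0 ≤ h x) :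
    ∫ x, h x ∂(rieszμ hΨ) ≤ Ψ h := by
  haveI := rieszμ_prob hΨ hΨ1
  have key : ∀ n : ℕ, ∫ x, h x ∂(rieszμ hΨ) ≤ Ψ h + 1 / (n + 1) := by
    intro n
    set μ := rieszμ hΨ with hμdef
    set m : ℝ := (n : ℝ) + 1 with hmdef
    have hm : 0 < m := by positivity
    set N : ℕ := ⌈m * ‖h‖⌉₊ + 1 with hNdef
    set φ : ℕ → C(X, ℝ) := fun k =>
      ⟨fun x => min 1 (max 0 (m * h x - k)), by
        apply Continuous.min continuous_const
        apply Continuous.max continuous_const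
        exact ((continuous_const.mul h.continuous).sub continuous_const)⟩ with hφdef
    have hφ0 : ∀ k x, 0 ≤ φ k x := fun k x =>
      le_min zero_le_one (le_max_left 0 _)
    have hφ1 : ∀ k (x : X), φ k x ≤ 1 := fun k x => min_le_left _ _
    have hsum : ∀ x, ∑ k ∈ Finset.range N, φ k x = m * h x := by
      intro x
      apply staircase
      · exact mul_nonneg (le_of_lt hm) (hh x)
      · have h1 : h x ≤ ‖h‖ := le_trans (le_abs_self _) (h.norm_coe_le_norm x)
        have h2 : m * h x ≤ m * ‖h‖ := mul_le_mul_of_nonneg_left h1 (le_of_lt hm)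
        have h3 : m * ‖h‖ ≤ (⌈m * ‖h‖⌉₊ : ℝ) := Nat.le_ceil _
        have h4 : ((N : ℝ)) = (⌈m * ‖h‖⌉₊ : ℝ) + 1 := by rw [hNdef]; push_cast; ring
        rw [h4]; linarith
    set A : ℕ → Set X := fun k => {x | (k : ℝ) < m * h x} with hAdef
    have hAopen : ∀ k, IsOpen (A k) := by
      intro k
      have : A k = (fun x => m * h x) ⁻¹' (Set.Ioi (k : ℝ)) := rfl
      rw [this]
      exact isOpen_Ioi.preimage (continuous_const.mul h.continuous)
    have hμA : ∀ k : ℕ, μ (A (k + 1)) ≤ ENNReal.ofReal (Ψ (φ k)) := by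
      intro k
      apply rieszμ_open_le hΨ (hAopen _) (hφ0 k)
      intro x hx
      have hx' : ((k : ℝ) + 1) < m * h x := by
        have : (((k + 1 : ℕ)) : ℝ) < m * h x := hx
        push_cast at this; linarith
      have h1 : (1 : ℝ) ≤ m * h x - k := by linarith
      show (1:ℝ) ≤ min 1 (max 0 (m * h x - k))
      exact le_min le_rfl (le_trans h1 (le_max_right 0 _))
    have hint : ∀ k : ℕ, ∫ x, φ (k + 1) x ∂μ ≤ Ψ (φ k) := by
      intro k
      have hind : Integrable ((A (k+1)).indicator (fun _ => (1:ℝ))) μ := by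
        apply IntegrableOn.integrable_indicator (integrableOn_const (measure_ne_top μ _))
          (hAopen _).measurableSet
      have h1 : ∫ x, φ (k + 1) x ∂μ ≤ ∫ x, (A (k+1)).indicator (fun _ => (1:ℝ)) x ∂μ := by
        apply integral_mono (cm_integrable μ _) hind
        intro x
        by_cases hx : x ∈ A (k+1)
        · simp only [Set.indicator_of_mem hx]
          exact hφ1 _ x
        · simp only [Set.indicator_of_notMem hx]
          have hx' : m * h x ≤ (k:ℝ) + 1 := by
            simp only [hAdef, Set.mem_setOf_eq, not_lt] at hx
            push_cast at hx; linarith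
          show min 1 (max 0 (m * h x - ((k+1:ℕ):ℝ))) ≤ 0
          have : max 0 (m * h x - ((k+1:ℕ):ℝ)) = 0 := by
            rw [max_eq_left]; push_cast; linarith
          rw [this]; exact min_le_right _ _
      have h2 : ∫ x, (A (k+1)).indicator (fun _ => (1:ℝ)) x ∂μ = (μ (A (k+1))).toReal := by
        rw [integral_indicator_const (1:ℝ) (hAopen _).measurableSet]; simp [Measure.real]
      have h3 : (μ (A (k+1))).toReal ≤ Ψ (φ k) :=
        ENNReal.toReal_le_of_le_ofReal (hΨ _ (hφ0 k)) (hμA k)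
      linarith
    have hφ0int : ∫ x, φ 0 x ∂μ ≤ 1 := by
      have : ∫ x, φ 0 x ∂μ ≤ ∫ _x, (1:ℝ) ∂μ :=
        integral_mono (cm_integrable μ _) (integrable_const 1) (fun x => hφ1 0 x)
      simpa using this
    have hsplit : ∑ k ∈ Finset.range N, ∫ x, φ k x ∂μ = m * ∫ x, h x ∂μ := by
      rw [← integral_finset_sum _ (fun k _ => cm_integrable μ (φ k))]
      rw [show (fun x => ∑ k ∈ Finset.range N, φ k x) = fun x => m * h x by
        funext x; exact hsum x]
      exact integral_const_mul m _
    have hΨsplit : ∑ k ∈ Finset.range N, Ψ (φ k) = m * Ψ h := by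
      rw [← map_sum]
      have : ∑ k ∈ Finset.range N, φ k = m • h := by
        ext x
        simp only [ContinuousMap.coe_sum, Finset.sum_apply, ContinuousMap.smul_apply,
          smul_eq_mul]
        exact hsum x
      rw [this, _root_.map_smul, smul_eq_mul]
    have hstep : ∑ k ∈ Finset.range N, ∫ x, φ k x ∂μ ≤ 1 + ∑ k ∈ Finset.range N, Ψ (φ k) := by
      obtain ⟨M, hM⟩ : ∃ M, N = M + 1 := ⟨⌈m * ‖h‖⌉₊, rfl⟩
      rw [hM, Finset.sum_range_succ' (fun k => ∫ x, φ k x ∂μ) M]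
      calc (∑ k ∈ Finset.range M, ∫ x, φ (k+1) x ∂μ) + ∫ x, φ 0 x ∂μ
          ≤ (∑ k ∈ Finset.range M, Ψ (φ k)) + 1 :=
            add_le_add (Finset.sum_le_sum fun k _ => hint k) hφ0int
        _ ≤ (∑ k ∈ Finset.range (M+1), Ψ (φ k)) + 1 := by
            refine add_le_add_left ?_ 1
            refine Finset.sum_le_sum_of_subset_of_nonneg
              (Finset.range_subset_range.mpr (by omega)) ?_
            intro k _ _; exact hΨ _ (hφ0 k)
        _ = 1 + ∑ k ∈ Finset.range (M+1), Ψ (φ k) := by ring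
    have hfinal : m * ∫ x, h x ∂μ ≤ 1 + m * Ψ h := by
      rw [← hsplit, ← hΨsplit]; exact hstep
    rw [hmdef] at hfinal
    have hm' : (0:ℝ) < (n:ℝ) + 1 := by positivity
    have hinv : ((n:ℝ) + 1) * (1 / ((n:ℝ) + 1)) = 1 := mul_one_div_cancel (ne_of_gt hm')
    nlinarith [hfinal, hinv, hm']
  refine le_of_forall_pos_le_add (fun ε hε => ?_)
  obtain ⟨n, hn⟩ := exists_nat_one_div_lt hε
  exact le_trans (key n) (by linarith [hn])

lemma integral_eq_psi (g : C(X, ℝ)) : ∫ x, g x ∂(rieszμ hΨ) = Ψ g := by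
  haveI := rieszμ_prob hΨ hΨ1
  have key : ∀ g : C(X, ℝ), ∫ x, g x ∂(rieszμ hΨ) ≤ Ψ g := by
    intro g
    have hnn : ∀ x, 0 ≤ (g + ‖g‖ • (1 : C(X,ℝ))) x := by
      intro x
      simp only [ContinuousMap.add_apply, ContinuousMap.smul_apply, ContinuousMap.one_apply,
        smul_eq_mul, mul_one]
      have : -g x ≤ |g x| := neg_le_abs _
      have h2 : |g x| ≤ ‖g‖ := g.norm_coe_le_norm x
      linarith
    have h1 := integral_le_psi hΨ hΨ1 _ hnn
    have h2 : ∫ x, (g + ‖g‖ • (1 : C(X,ℝ))) x ∂(rieszμ hΨ)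
        = (∫ x, g x ∂(rieszμ hΨ)) + ‖g‖ := by
      have : (fun x => (g + ‖g‖ • (1 : C(X,ℝ))) x) = fun x => g x + ‖g‖ := by
        funext x; simp [smul_eq_mul]
      rw [this, integral_add (cm_integrable _ g) (integrable_const _)]
      simp
    have h3 : Ψ (g + ‖g‖ • (1 : C(X,ℝ))) = Ψ g + ‖g‖ := by
      rw [map_add, _root_.map_smul, hΨ1, smul_eq_mul, mul_one]
    rw [h2, h3] at h1
    linarith
  have h1 := key g
  have h2 := key (-g)
  have h3 : ∫ x, (-g : C(X,ℝ)) x ∂(rieszμ hΨ) = - ∫ x, g x ∂(rieszμ hΨ) := by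
    simp only [ContinuousMap.neg_apply]
    exact integral_neg _
  have h4 : Ψ (-g) = - Ψ g := map_neg Ψ g
  rw [h3, h4] at h2
  linarith

end RMK4

/-- Hahn–Banach approximation lemma (Ghys/Sullivan, Lemma 3.3 of
Deroin–Kleptsyn): if `X` is a nonempty compact metric space, `E` a linear
subspace of `C(X, ℝ)` and `f ∈ C(X, ℝ)` is such that `∫ f dμ ≥ 0` for every
Borel probability measure `μ` annihilating `E`, then for every `ε > 0` there
is `g ∈ E` with `f - g ≥ -ε` everywhere. -/
theorem hahn_banach_approximation
    {X : Type*} [MetricSpace X] [CompactSpace X] [Nonempty X]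
    [MeasurableSpace X] [BorelSpace X]
    (E : Submodule ℝ C(X, ℝ)) (f : C(X, ℝ))
    (hpos : ∀ μ : Measure X, IsProbabilityMeasure μ →
      (∀ g ∈ E, ∫ x, g x ∂μ = 0) → 0 ≤ ∫ x, f x ∂μ) :
    ∀ ε > (0 : ℝ), ∃ g ∈ E, ∀ x : X, f x - g x ≥ -ε := by
  intro ε hε
  by_contra hc
  push_neg at hc
  -- `hc : ∀ g ∈ E, ∃ x, f x - g x < -ε`
  set s : Set C(X, ℝ) := {h | ∀ x, -ε < h x} with hsdef
  set t : Set C(X, ℝ) := (fun g => f - g) '' (E : Set C(X, ℝ)) with htdef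
  have hs_open : IsOpen s := by
    rw [Metric.isOpen_iff]
    intro h hh
    obtain ⟨x₀, -, hx₀⟩ := isCompact_univ.exists_isMinOn univ_nonempty
      h.continuous.continuousOn
    refine ⟨h x₀ + ε, by have := hh x₀; linarith, fun h' hh' => ?_⟩
    intro x
    have hx₀' : ∀ y : X, h x₀ ≤ h y := fun y => hx₀ (Set.mem_univ y)
    rw [Metric.mem_ball, dist_eq_norm] at hh'
    have hb : |h' x - h x| ≤ ‖h' - h‖ := by
      have := (h' - h).norm_coe_le_norm x
      simpa [Real.norm_eq_abs] using this
    have := hx₀' x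
    have habs : -(h x₀ + ε) < h' x - h x := by
      have : -(h' x - h x) ≤ |h' x - h x| := neg_le_abs _
      linarith
    linarith
  have hs_conv : Convex ℝ s := by
    intro h₁ hh₁ h₂ hh₂ a b ha hb hab
    intro x
    have e1 : (a • h₁ + b • h₂) x = a * h₁ x + b * h₂ x := by
      simp [smul_eq_mul]
    rw [e1]
    show -ε < a * h₁ x + b * h₂ x
    have k1 : a * (-ε) ≤ a * h₁ x := mul_le_mul_of_nonneg_left (le_of_lt (hh₁ x)) ha
    have k2 : b * (-ε) ≤ b * h₂ x := mul_le_mul_of_nonneg_left (le_of_lt (hh₂ x)) hb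
    have key : a * (-ε) + b * (-ε) = -ε := by rw [← add_mul, hab, one_mul]
    rcases lt_or_eq_of_le ha with ha' | ha'
    · have k1' : a * (-ε) < a * h₁ x := (mul_lt_mul_iff_right₀ ha').mpr (hh₁ x)
      linarith
    · have hb' : 0 < b := by linarith
      have k2' : b * (-ε) < b * h₂ x := (mul_lt_mul_iff_right₀ hb').mpr (hh₂ x)
      linarith
  have ht_conv : Convex ℝ t := by
    have : t = ({f} : Set C(X,ℝ)) + (-(E : Set C(X,ℝ))) := by
      ext h
      simp only [htdef, Set.mem_image, Set.mem_add, Set.mem_singleton_iff, Set.mem_neg,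
        SetLike.mem_coe]
      constructor
      · rintro ⟨g, hg, rfl⟩; exact ⟨f, rfl, -g, by simpa using hg, by abel⟩
      · rintro ⟨a, rfl, b, hb, rfl⟩
        exact ⟨-b, by simpa using hb, by abel⟩
    rw [this]
    exact (convex_singleton f).add (E.convex.neg)
  have hdisj : Disjoint s t := by
    rw [Set.disjoint_left]
    rintro h hhs ⟨g, hg, rfl⟩
    obtain ⟨x, hx⟩ := hc g hg
    have := hhs x
    simp only [ContinuousMap.sub_apply] at this
    linarith
  obtain ⟨φ, u, hsu, htu⟩ := geometric_hahn_banach_open hs_conv hs_open ht_conv hdisj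
  have hu0 : 0 < u := by
    have h0s : (0 : C(X, ℝ)) ∈ s := fun x => by simpa using hε
    have := hsu 0 h0s
    simpa using this
  have hφE : ∀ g ∈ E, φ g = 0 := by
    intro g hg
    by_contra hne
    -- choose c with φ f - c * φ g = u - 1 < u
    set c : ℝ := (φ f - (u - 1)) / φ g with hcdef
    have hcg : c • g ∈ E := E.smul_mem c hg
    have := htu (f - c • g) ⟨c • g, hcg, rfl⟩
    rw [map_sub, _root_.map_smul] at this
    have : u ≤ φ f - c * φ g := by simpa [smul_eq_mul] using this
    rw [hcdef, div_mul_cancel₀ _ hne] at this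
    linarith
  have hφf : u ≤ φ f := by
    have := htu (f - 0) ⟨0, E.zero_mem, rfl⟩
    simpa using this
  have hφpos : ∀ h : C(X, ℝ), (∀ x, 0 ≤ h x) → φ h ≤ 0 := by
    intro h hh
    by_contra hp
    push_neg at hp
    set c : ℝ := (u + 1) / φ h with hcdef
    have hc : 0 < c := by positivity
    have hmem : c • h ∈ s := by
      intro x
      have : 0 ≤ (c • h) x := by
        simp only [ContinuousMap.smul_apply, smul_eq_mul]
        exact mul_nonneg (le_of_lt hc) (hh x)
      linarith
    have := hsu _ hmem
    rw [_root_.map_smul, smul_eq_mul, hcdef, div_mul_cancel₀ _ (ne_of_gt hp)] at this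
    linarith
  -- normalize
  set c₁ : ℝ := -φ 1 with hc₁def
  have hc₁0 : 0 ≤ c₁ := by
    have := hφpos 1 (fun x => by norm_num)
    simp only [hc₁def]; linarith
  have hc₁pos : 0 < c₁ := by
    rcases lt_or_eq_of_le hc₁0 with hlt | heq
    · exact hlt
    · exfalso
      -- φ 1 = 0 forces φ = 0, contradicting u ≤ φ f, u > 0
      have hall : ∀ h : C(X, ℝ), 0 ≤ φ h := by
        intro h
        have hnn : ∀ x, 0 ≤ (‖h‖ • (1 : C(X,ℝ)) - h) x := by
          intro x
          simp only [ContinuousMap.sub_apply, ContinuousMap.smul_apply,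
            ContinuousMap.one_apply, smul_eq_mul, mul_one, sub_nonneg]
          exact le_trans (le_abs_self _) (h.norm_coe_le_norm x)
        have := hφpos _ hnn
        rw [map_sub, _root_.map_smul, smul_eq_mul] at this
        have h1 : φ 1 = 0 := by rw [hc₁def] at heq; linarith
        rw [h1] at this
        linarith
      have h1 := hall (-f)
      rw [map_neg] at h1
      linarith
  set Ψ : C(X, ℝ) →ₗ[ℝ] ℝ := c₁⁻¹ • (-φ.toLinearMap) with hΨdef
  have hΨapp : ∀ h : C(X, ℝ), Ψ h = c₁⁻¹ * (-(φ h)) := by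
    intro h; simp [hΨdef, smul_eq_mul]
  have hΨ : ∀ g : C(X, ℝ), (∀ x, 0 ≤ g x) → 0 ≤ Ψ g := by
    intro g hg
    rw [hΨapp]
    have := hφpos g hg
    have hinv : 0 ≤ c₁⁻¹ := inv_nonneg.mpr hc₁0
    nlinarith
  have hΨ1 : Ψ 1 = 1 := by
    rw [hΨapp]
    rw [hc₁def] at *
    field_simp
    exact div_self (ne_of_lt (by linarith))
  have hΨE : ∀ g ∈ E, Ψ g = 0 := by
    intro g hg
    rw [hΨapp, hφE g hg]
    ring
  have hΨf : Ψ f < 0 := by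
    rw [hΨapp]
    have hinv : 0 < c₁⁻¹ := inv_pos.mpr hc₁pos
    nlinarith
  -- build the Riesz measure and contradict `hpos`
  haveI := rieszμ_prob hΨ hΨ1
  have h0 := hpos (rieszμ hΨ) (rieszμ_prob hΨ hΨ1)
    (fun g hg => by rw [integral_eq_psi hΨ hΨ1 g]; exact hΨE g hg)
  rw [integral_eq_psi hΨ hΨ1 f] at h0
  linarith
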